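/- Fix H ∈ (0, 1/2) and θ₀ = (α₀, μ₀) with α₀ > 0. Define g : ℝ² → ℝ² by g(α, μ) := (α, αμ), with Jacobian matrix J_g(α, μ) having rows (1, 0) and (μ, α). Let (φ_T)_{T>0} and φ̄ be real 2×2 matrices satisfying all six conditions of Assumption 1: √T·φ_T^{11} → φ̄_{11}, √T·φ_T^{12} → φ̄_{12}, T^{1−H}(μ₀φ_T^{11} − φ_T^{21}) → φ̄_{21}, T^{1−H}(μ₀φ_T^{12} − φ_T^{22}) → φ̄_{22} as T → ∞, det φ_T ≠ 0 for each T > 0, and det φ̄ ≠ 0. Set Ψ_T := J_g(θ₀)^{−1} φ_T. Then for every u ∈ ℝ² there exist C > 0 and T₀ > 0 such that for all T ≥ T₀: ‖ φ_T^{−1} ∫₀¹ ( J_g(θ₀ + ε Ψ_T u) − J_g(θ₀) ) Ψ_T u dε ‖ ≤ C·T^{−1/2}. -/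

import Mathlib

open Real Filter Matrix MeasureTheory

/-- Taylor remainder estimate in the proof of the LAN property for the parameterization
`θ = (α, μ)`: with `g(α,μ) = (α, αμ)`, `J_g(α,μ) = !![1,0; μ,α]`, `Ψ_T = J_g(θ₀)⁻¹ φ_T` and
`φ_T` satisfying Assumption 1, for every `u ∈ ℝ²` there are `C > 0` and `T₀ > 0` with
`‖φ_T⁻¹ ∫₀¹ (J_g(θ₀ + ε Ψ_T u) - J_g(θ₀)) Ψ_T u dε‖ ≤ C T^{-1/2}` for all `T ≥ T₀`. -/
theorem stmt_14 (H α₀ μ₀ : ℝ) (hH : H ∈ Set.Ioo (0 : ℝ) (1/2)) (hα₀ : 0 < α₀)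
    (θ₀ : Fin 2 → ℝ) (hθ₀ : θ₀ = ![α₀, μ₀])
    (Jg : (Fin 2 → ℝ) → Matrix (Fin 2) (Fin 2) ℝ)
    (hJg : ∀ v : Fin 2 → ℝ, Jg v = !![1, 0; v 1, v 0])
    (φ : ℝ → Matrix (Fin 2) (Fin 2) ℝ) (φbar : Matrix (Fin 2) (Fin 2) ℝ)
    (h11 : Tendsto (fun T : ℝ => Real.sqrt T * φ T 0 0) atTop (nhds (φbar 0 0)))
    (h12 : Tendsto (fun T : ℝ => Real.sqrt T * φ T 0 1) atTop (nhds (φbar 0 1)))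
    (h21 : Tendsto (fun T : ℝ => T ^ (1 - H) * (μ₀ * φ T 0 0 - φ T 1 0)) atTop
      (nhds (φbar 1 0)))
    (h22 : Tendsto (fun T : ℝ => T ^ (1 - H) * (μ₀ * φ T 0 1 - φ T 1 1)) atTop
      (nhds (φbar 1 1)))
    (hdet : ∀ T > (0 : ℝ), (φ T).det ≠ 0)
    (hdetbar : φbar.det ≠ 0)
    (Ψ : ℝ → Matrix (Fin 2) (Fin 2) ℝ) (hΨ : ∀ T : ℝ, Ψ T = (Jg θ₀)⁻¹ * φ T) :
    ∀ u : Fin 2 → ℝ, ∃ C > (0 : ℝ), ∃ T₀ > (0 : ℝ), ∀ T ≥ T₀,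
      ‖(φ T)⁻¹.mulVec
          (∫ ε in (0 : ℝ)..1,
            (Jg (θ₀ + ε • (Ψ T).mulVec u) - Jg θ₀).mulVec ((Ψ T).mulVec u))‖ ≤
        C * T ^ (-(1 : ℝ)/2) := by
  intro u
  have hα₀' : α₀ ≠ 0 := ne_of_gt hα₀
  have hJgθ : Jg θ₀ = !![1, 0; μ₀, α₀] := by
    rw [hJg, hθ₀]; norm_num
  have hinv : (Jg θ₀)⁻¹ = !![1, 0; -(μ₀/α₀), α₀⁻¹] := by
    apply Matrix.inv_eq_right_inv
    rw [hJgθ]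
    ext i j
    fin_cases i <;> fin_cases j <;>
      simp [Matrix.mul_apply, Fin.sum_univ_two] <;> field_simp <;> ring
  -- components of Ψ T * u
  have hv : ∀ T : ℝ, (Ψ T).mulVec u =
      ![φ T 0 0 * u 0 + φ T 0 1 * u 1,
        -(α₀⁻¹ * ((μ₀ * φ T 0 0 - φ T 1 0) * u 0 + (μ₀ * φ T 0 1 - φ T 1 1) * u 1))] := by
    intro T
    rw [hΨ, ← Matrix.mulVec_mulVec, hinv]
    ext i
    fin_cases i <;>
      simp [Matrix.mulVec, dotProduct, Fin.sum_univ_two] <;> field_simp <;> ring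
  -- the integral
  have hInt : ∀ T : ℝ,
      (∫ ε in (0:ℝ)..1, (Jg (θ₀ + ε • (Ψ T).mulVec u) - Jg θ₀).mulVec ((Ψ T).mulVec u))
        = ![0, ((Ψ T).mulVec u 0) * ((Ψ T).mulVec u 1)] := by
    intro T
    have heq : (fun ε : ℝ => (Jg (θ₀ + ε • (Ψ T).mulVec u) - Jg θ₀).mulVec ((Ψ T).mulVec u))
        = fun ε : ℝ => ε • ![0, 2 * (((Ψ T).mulVec u 0) * ((Ψ T).mulVec u 1))] := by
      funext ε; ext i
      fin_cases i <;>
        simp [hJg, Matrix.mulVec, dotProduct, Fin.sum_univ_two, Matrix.sub_apply, Matrix.vecHead, Matrix.vecTail] <;> ring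
    rw [heq, intervalIntegral.integral_smul_const, integral_id]
    ext i; fin_cases i <;> simp <;> ring
  -- explicit inverse action
  have hRform : ∀ T : ℝ, 0 < T → ∀ w : ℝ, (φ T)⁻¹.mulVec ![0, w]
      = ((φ T).det)⁻¹ • ![-(φ T 0 1) * w, (φ T 0 0) * w] := by
    intro T hT w
    rw [Matrix.inv_def, Ring.inverse_eq_inv', Matrix.adjugate_fin_two,
      Matrix.smul_mulVec]
    congr 1
    ext i
    fin_cases i <;>
      simp [Matrix.mulVec, dotProduct, Fin.sum_univ_two] <;> ring
  -- scaled quantities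
  set a : ℝ → ℝ := fun T => Real.sqrt T * φ T 0 0 with ha
  set b : ℝ → ℝ := fun T => Real.sqrt T * φ T 0 1 with hb
  set c : ℝ → ℝ := fun T => T ^ (1 - H) * (μ₀ * φ T 0 0 - φ T 1 0) with hc
  set d : ℝ → ℝ := fun T => T ^ (1 - H) * (μ₀ * φ T 0 1 - φ T 1 1) with hd
  set k : ℝ → ℝ := fun T =>
    α₀⁻¹ * (a T * u 0 + b T * u 1) * (c T * u 0 + d T * u 1) / (b T * c T - a T * d T) with hk
  -- key identity
  have hkey : ∀ T : ℝ, 0 < T →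
      Real.sqrt T • ((φ T)⁻¹.mulVec
        (∫ ε in (0 : ℝ)..1,
          (Jg (θ₀ + ε • (Ψ T).mulVec u) - Jg θ₀).mulVec ((Ψ T).mulVec u)))
      = k T • ![b T, -(a T)] := by
    intro T hT
    have hs : (0:ℝ) < Real.sqrt T := Real.sqrt_pos.mpr hT
    have ht : (0:ℝ) < T ^ (1 - H) := Real.rpow_pos_of_pos hT _
    have hdT := hdet T hT
    have hbcad : b T * c T - a T * d T = Real.sqrt T * T ^ (1 - H) * (φ T).det := by
      rw [ha, hb, hc, hd, Matrix.det_fin_two]; ring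
    have hbcad' : b T * c T - a T * d T ≠ 0 := by
      rw [hbcad]; positivity
    rw [hInt, hv, hRform T hT]
    ext i
    fin_cases i <;>
      simp only [Pi.smul_apply, smul_eq_mul, Matrix.cons_val_zero, Matrix.cons_val_one,
        Matrix.head_cons, hk, Fin.zero_eta, Fin.mk_one] <;>
    · rw [hbcad] at *
      field_simp
      rw [ha, hb, hc, hd]
      ring
  -- limits
  have hD : Tendsto (fun T => b T * c T - a T * d T) atTop
      (nhds (φbar 0 1 * φbar 1 0 - φbar 0 0 * φbar 1 1)) :=
    ((h12.mul h21).sub (h11.mul h22))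
  have hDne : φbar 0 1 * φbar 1 0 - φbar 0 0 * φbar 1 1 ≠ 0 := by
    rw [Matrix.det_fin_two] at hdetbar
    intro h; apply hdetbar; linarith
  have hkT : Tendsto k atTop (nhds
      (α₀⁻¹ * (φbar 0 0 * u 0 + φbar 0 1 * u 1) * (φbar 1 0 * u 0 + φbar 1 1 * u 1) /
        (φbar 0 1 * φbar 1 0 - φbar 0 0 * φbar 1 1))) := by
    exact (((tendsto_const_nhds.mul ((h11.mul tendsto_const_nhds).add
      (h12.mul tendsto_const_nhds))).mul ((h21.mul tendsto_const_nhds).add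
      (h22.mul tendsto_const_nhds))).div hD hDne)
  set m : ℝ → ℝ := fun T => |k T| * (|b T| + |a T|) with hm
  set mbar : ℝ := |α₀⁻¹ * (φbar 0 0 * u 0 + φbar 0 1 * u 1) *
      (φbar 1 0 * u 0 + φbar 1 1 * u 1) /
        (φbar 0 1 * φbar 1 0 - φbar 0 0 * φbar 1 1)| * (|φbar 0 1| + |φbar 0 0|) with hmbar
  have hmT : Tendsto m atTop (nhds mbar) :=
    hkT.abs.mul (h12.abs.add h11.abs)
  have hmbar0 : 0 ≤ mbar := by rw [hmbar]; positivity
  have hev : ∀ᶠ T in atTop, m T ≤ mbar + 1 :=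
    hmT.eventually (eventually_le_nhds (lt_add_one mbar))
  rw [eventually_atTop] at hev
  obtain ⟨T₁, hT₁⟩ := hev
  refine ⟨mbar + 1, by linarith, max T₁ 1, lt_of_lt_of_le one_pos (le_max_right _ _), ?_⟩
  intro T hT
  have hT1 : (1:ℝ) ≤ T := le_trans (le_max_right _ _) hT
  have hT0 : (0:ℝ) < T := lt_of_lt_of_le one_pos hT1
  have hs : (0:ℝ) < Real.sqrt T := Real.sqrt_pos.mpr hT0
  -- norm bound
  have hnorm : Real.sqrt T * ‖(φ T)⁻¹.mulVec
      (∫ ε in (0 : ℝ)..1,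
        (Jg (θ₀ + ε • (Ψ T).mulVec u) - Jg θ₀).mulVec ((Ψ T).mulVec u))‖ ≤ m T := by
    have h1 : Real.sqrt T * ‖(φ T)⁻¹.mulVec
        (∫ ε in (0 : ℝ)..1,
          (Jg (θ₀ + ε • (Ψ T).mulVec u) - Jg θ₀).mulVec ((Ψ T).mulVec u))‖
        = ‖k T • (![b T, -(a T)] : Fin 2 → ℝ)‖ := by
      rw [← hkey T hT0, norm_smul, Real.norm_eq_abs, abs_of_nonneg (Real.sqrt_nonneg T)]
    rw [h1, norm_smul, Real.norm_eq_abs, hm]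
    refine mul_le_mul_of_nonneg_left ?_ (abs_nonneg _)
    rw [pi_norm_le_iff_of_nonneg (by positivity)]
    intro i
    fin_cases i
    · simpa using le_add_of_nonneg_right (abs_nonneg (a T))
    · simpa [abs_neg] using le_add_of_nonneg_left (abs_nonneg (b T))
  have hmle : m T ≤ mbar + 1 := hT₁ T (le_trans (le_max_left _ _) hT)
  have hfin : ‖(φ T)⁻¹.mulVec
      (∫ ε in (0 : ℝ)..1,
        (Jg (θ₀ + ε • (Ψ T).mulVec u) - Jg θ₀).mulVec ((Ψ T).mulVec u))‖
      ≤ (mbar + 1) / Real.sqrt T := by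
    rw [le_div_iff₀ hs, mul_comm]
    exact le_trans hnorm hmle
  calc _ ≤ (mbar + 1) / Real.sqrt T := hfin
    _ = (mbar + 1) * T ^ (-(1:ℝ)/2) := by
        rw [Real.sqrt_eq_rpow, div_eq_mul_inv, ← Real.rpow_neg (le_of_lt hT0)]
        norm_num
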